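/- arXiv:1609.00242 — 9 statements merged into one kernel-verified Lean document; each statement's English description precedes it below -/
import Mathlib

section
/- If the reaping number equals the continuum, then the strong polarized partition relation fails for the continuum: there exists a coloring c : 𝔠 × ω → 2 such that for no sets A ⊆ 𝔠 of cardinality 𝔠 and B ⊆ ω infinite is c constant on A × B. -/
open Cardinal Set

/-- `S` splits the infinite set `B` if both `B ∩ S` and `B \ S` are infinite. -/
def Splits (S B : Set ℕ) : Prop := (B ∩ S).Infinite ∧ (B \ S).Infinite

/-- The reaping number `𝔯`: the least cardinality of a family of infinite subsets of `ω`
such that no single infinite set splits every member of the family. -/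
noncomputable def reapingNumber : Cardinal :=
  sInf {c : Cardinal | ∃ R : Set (Set ℕ), (∀ B ∈ R, B.Infinite) ∧
    (∀ S : Set ℕ, S.Infinite → ∃ B ∈ R, ¬ Splits S B) ∧ #R = c}

theorem reaping_eq_continuum_implies_neg_polarized
    (h : reapingNumber = Cardinal.continuum) :
    ∃ c : Cardinal.continuum.ord.ToType × ℕ → Bool,
      ∀ A : Set Cardinal.continuum.ord.ToType, ∀ B : Set ℕ,
        #A = Cardinal.continuum → B.Infinite →
          ¬ ∃ v : Bool, ∀ a ∈ A, ∀ b ∈ B, c (a, b) = v := by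
  classical
  set T := Cardinal.continuum.ord.ToType with hT
  -- small families of infinite sets are split by a single infinite set
  have key : ∀ R : Set (Set ℕ), (∀ B ∈ R, B.Infinite) → #R < Cardinal.continuum →
      ∃ S : Set ℕ, S.Infinite ∧ ∀ B ∈ R, Splits S B := by
    intro R hR hcard
    by_contra hcon
    push_neg at hcon
    have hle : reapingNumber ≤ #R := by
      apply csInf_le'
      exact ⟨R, hR, fun S hS => hcon S hS, rfl⟩
    rw [h] at hle
    exact absurd (hle.trans_lt hcard) (lt_irrefl _)
  -- an enumeration of all infinite subsets of ℕ by T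
  have hI0 : #{B : Set ℕ // B.Infinite} ≤ Cardinal.continuum := by
    calc #{B : Set ℕ // B.Infinite} ≤ #(Set ℕ) := Cardinal.mk_subtype_le _
    _ = 2 ^ (ℵ₀ : Cardinal) := by rw [Cardinal.mk_set, Cardinal.mk_nat]
    _ = Cardinal.continuum := Cardinal.two_power_aleph0
  have hI : Nonempty ({B : Set ℕ // B.Infinite} ↪ T) := by
    rw [← Cardinal.lift_mk_le']
    simp only [hT, Cardinal.mk_ord_toType, Cardinal.lift_continuum, Cardinal.lift_le_continuum]
    exact hI0
  obtain ⟨f⟩ := hI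
  have hne : Nonempty {B : Set ℕ // B.Infinite} := ⟨⟨Set.univ, Set.infinite_univ⟩⟩
  set e : T → {B : Set ℕ // B.Infinite} := Function.invFun f with he
  have hef : ∀ x, e (f x) = x := Function.leftInverse_invFun f.injective
  -- for each α, pick an infinite set splitting all sets enumerated before α
  have hSα : ∀ α : T, ∃ S : Set ℕ, S.Infinite ∧
      ∀ B ∈ (fun β => (e β).1) '' Iio α, Splits S B := by
    intro α
    apply key
    · rintro B ⟨β, -, rfl⟩
      exact (e β).2
    · refine Cardinal.lift_lt_continuum.mp (lt_of_le_of_lt Cardinal.mk_image_le_lift ?_)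
      exact Cardinal.lift_lt_continuum.mpr (Cardinal.mk_Iio_ord_toType α)
  choose S hSinf hSsplit using hSα
  refine ⟨fun p => decide (p.2 ∈ S p.1), ?_⟩
  rintro A B hA hB ⟨v, hv⟩
  -- find α ∈ A above the index of B
  set β : T := f ⟨B, hB⟩ with hβ
  have : ∃ α ∈ A, β < α := by
    by_contra hcon
    push_neg at hcon
    have hsub : A ⊆ Iic β := fun α hα => hcon α hα
    have h1 : #A ≤ #(Iic β) := Cardinal.mk_le_mk_of_subset hsub
    have h2 : #(Iic β) ≤ #(Iio β) + 1 := by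
      rw [← Set.Iio_insert]
      exact Cardinal.mk_insert_le
    have h3 : #(Iio β) + 1 < Cardinal.continuum :=
      Cardinal.add_lt_of_lt Cardinal.aleph0_le_continuum (Cardinal.mk_Iio_ord_toType β)
        (lt_of_lt_of_le Cardinal.one_lt_aleph0 Cardinal.aleph0_le_continuum)
    rw [hA] at h1
    exact absurd (h1.trans_lt (h2.trans_lt h3)) (lt_irrefl _)
  obtain ⟨α, hαA, hβα⟩ := this
  have hsplit : Splits (S α) B := by
    have : B ∈ (fun γ => (e γ).1) '' Iio α := ⟨β, hβα, by show ((e β : Set ℕ)) = B; rw [hβ, hef]⟩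
    exact hSsplit α B this
  obtain ⟨hi, hd⟩ := hsplit
  cases v with
  | true =>
    obtain ⟨x, hxB, hxS⟩ := hd.nonempty
    have := hv α hαA x hxB
    simp only [decide_eq_true_eq] at this
    exact hxS this
  | false =>
    obtain ⟨x, hxB, hxS⟩ := hi.nonempty
    have := hv α hαA x hxB
    simp only [decide_eq_false_iff_not] at this
    exact this hxS
end

section
/- If 𝔯 = 𝔠 then the splitting number 𝔰 is at most the cofinality of the continuum. -/
open Cardinal Set

/-- The splitting number `𝔰`: the least cardinality of a splitting family. -/
noncomputable def splittingNumber : Cardinal :=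
  sInf {c : Cardinal | ∃ F : Set (Set ℕ),
    (∀ B : Set ℕ, B.Infinite → ∃ S ∈ F, Splits S B) ∧ #F = c}

theorem splitting_le_cof_continuum_of_reaping_eq_continuum
    (h : reapingNumber = Cardinal.continuum) :
    splittingNumber ≤ Cardinal.continuum.ord.cof := by
  classical
  set o : Ordinal := Cardinal.continuum.ord with ho
  -- enumerate Set ℕ by o.ToType
  have hcard : #(Set ℕ) = #o.ToType := by
    rw [Cardinal.mk_toType, ho, Cardinal.card_ord, Cardinal.mk_set, Cardinal.mk_nat]
    exact (Cardinal.two_power_aleph0).symm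
  obtain ⟨f⟩ := Cardinal.eq.mp hcard
  -- cofinal set
  haveI : IsWellOrder o.ToType (· < ·) := isWellOrder_lt
  obtain ⟨C, hCub, hCcard⟩ := Order.exists_cof_eq o.ToType
  rw [Ordinal.cof_toType] at hCcard
  -- for each s, the family of infinite sets with index ≤ s
  set R : o.ToType → Set (Set ℕ) := fun s => {B | B.Infinite ∧ f B ≤ s} with hR
  have hRsmall : ∀ s, #(R s) < Cardinal.continuum := by
    intro s
    have h1 : #(R s) ≤ #(Iic s) := by
      refine Cardinal.mk_le_of_injective (f := fun x => (⟨f x.1, x.2.2⟩ : Iic s)) ?_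
      intro a b hab
      apply Subtype.ext
      exact f.injective (congrArg Subtype.val hab)
    have h2 : #(Iic s) ≤ #(Iio s) + 1 := by
      have : (Iic s : Set o.ToType) ⊆ insert s (Iio s) := by
        intro x hx
        rcases lt_or_eq_of_le (mem_Iic.mp hx) with h' | h'
        · exact Or.inr h'
        · exact Or.inl h'
      calc #(Iic s) ≤ #(insert s (Iio s) : Set o.ToType) := Cardinal.mk_le_mk_of_subset this
        _ ≤ #(Iio s) + 1 := Cardinal.mk_insert_le
    have h3 : #(Iio s) < Cardinal.continuum := Cardinal.mk_Iio_ord_toType s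
    refine lt_of_le_of_lt (h1.trans h2) ?_
    exact Cardinal.add_lt_of_lt Cardinal.aleph0_le_continuum h3
      (lt_of_lt_of_le Cardinal.one_lt_aleph0 Cardinal.aleph0_le_continuum)
  -- for each s, a set splitting everything in R s
  have hT : ∀ s : o.ToType, ∃ T : Set ℕ, ∀ B ∈ R s, Splits T B := by
    intro s
    by_contra hc
    push_neg at hc
    have hmem : #(R s) ∈ {c : Cardinal | ∃ R' : Set (Set ℕ), (∀ B ∈ R', B.Infinite) ∧
        (∀ S : Set ℕ, S.Infinite → ∃ B ∈ R', ¬ Splits S B) ∧ #R' = c} := by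
      refine ⟨R s, fun B hB => hB.1, fun S _ => ?_, rfl⟩
      obtain ⟨B, hB1, hB2⟩ := hc S
      exact ⟨B, hB1, hB2⟩
    have : reapingNumber ≤ #(R s) := csInf_le' hmem
    rw [h] at this
    exact absurd (hRsmall s) (not_lt.mpr this)
  choose T hTspec using hT
  -- the splitting family
  set F : Set (Set ℕ) := T '' C with hF
  have hFsplit : ∀ B : Set ℕ, B.Infinite → ∃ S ∈ F, Splits S B := by
    intro B hB
    obtain ⟨s, hsC, hs⟩ := hCub (f B)
    refine ⟨T s, mem_image_of_mem T hsC, hTspec s B ⟨hB, hs⟩⟩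
  have h1 : splittingNumber ≤ #F := csInf_le' ⟨F, hFsplit, rfl⟩
  have h2 : #F ≤ #C := Cardinal.mk_image_le
  rw [hCcard] at h2
  exact h1.trans h2
end

section
/- If 𝔯_σ = 𝔠 then the splitting number 𝔰 is at most the cofinality of the continuum. -/
open Cardinal Set

/-- `𝔯_σ`: the least cardinality of a family `R` of infinite subsets of `ω` such that
no countable collection `{S n : n ∈ ω}` of subsets of `ω` splits every member of `R`. -/
noncomputable def reapingNumberSigma : Cardinal :=
  sInf {c : Cardinal | ∃ R : Set (Set ℕ), (∀ B ∈ R, B.Infinite) ∧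
    (∀ S : ℕ → Set ℕ, ∃ B ∈ R, ∀ n : ℕ, ¬ Splits (S n) B) ∧ #R = c}

theorem splitting_le_cof_continuum_of_reapingSigma_eq_continuum
    (h : reapingNumberSigma = Cardinal.continuum) :
    splittingNumber ≤ Cardinal.continuum.ord.cof := by
  -- Step 1: every small family of infinite sets is σ-reapable
  have key : ∀ R : Set (Set ℕ), (∀ B ∈ R, B.Infinite) → #R < Cardinal.continuum →
      ∃ S : ℕ → Set ℕ, ∀ B ∈ R, ∃ n, Splits (S n) B := by
    intro R hinf hlt
    by_contra hc
    push_neg at hc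
    have hmem : #R ∈ {c : Cardinal | ∃ R : Set (Set ℕ), (∀ B ∈ R, B.Infinite) ∧
        (∀ S : ℕ → Set ℕ, ∃ B ∈ R, ∀ n : ℕ, ¬ Splits (S n) B) ∧ #R = c} :=
      ⟨R, hinf, fun S => hc S, rfl⟩
    have hle : reapingNumberSigma ≤ #R := csInf_le' hmem
    rw [h] at hle
    exact absurd hle (not_le.2 hlt)
  -- Step 2: set up a cofinal set in a well order of length continuum.ord
  haveI hwo : IsWellOrder Cardinal.continuum.{0}.ord.ToType (· < ·) := isWellOrder_lt
  obtain ⟨U, hU, hUcard⟩ :=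
    Order.exists_cof_eq Cardinal.continuum.{0}.ord.ToType
  rw [Ordinal.cof_toType] at hUcard
  obtain ⟨e⟩ : Nonempty (Set ℕ ≃ Cardinal.continuum.ord.ToType) := by
    rw [← Cardinal.eq, Cardinal.mk_ord_toType, mk_set, Cardinal.mk_nat,
      Cardinal.two_power_aleph0]
  -- initial segments are small
  have hsmall : ∀ t : Cardinal.continuum.ord.ToType,
      #{B : Set ℕ | B.Infinite ∧ e B ≤ t} < Cardinal.continuum := by
    intro t
    have hinj : Function.Injective
        (fun B : {B : Set ℕ | B.Infinite ∧ e B ≤ t} => (⟨e B.1, B.2.2⟩ : Iic t)) := by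
      intro B C hBC
      ext x
      have := e.injective (Subtype.ext_iff.1 hBC)
      simp [Subtype.ext_iff, this]
    have h1 : #{B : Set ℕ | B.Infinite ∧ e B ≤ t} ≤ #(Iic t) :=
      Cardinal.mk_le_of_injective hinj
    have h2 : #(Iic t) ≤ #(Iio t) + 1 := by
      rw [← Set.Iio_insert]
      exact Cardinal.mk_insert_le
    refine lt_of_le_of_lt (h1.trans h2) ?_
    exact Cardinal.add_lt_of_lt Cardinal.aleph0_le_continuum
      (Cardinal.mk_Iio_ord_toType t)
      (lt_of_lt_of_le Cardinal.one_lt_aleph0 Cardinal.aleph0_le_continuum)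
  -- choose splitting families for each initial segment
  choose σ hσ using fun s : U =>
    key {B : Set ℕ | B.Infinite ∧ e B ≤ s.1} (fun B hB => hB.1) (hsmall s.1)
  set F : Set (Set ℕ) := Set.range (fun p : U × ℕ => σ p.1 p.2) with hF
  have hsplit : ∀ B : Set ℕ, B.Infinite → ∃ S ∈ F, Splits S B := by
    intro B hB
    obtain ⟨t, ht, hle⟩ := hU (e B)
    obtain ⟨n, hn⟩ := hσ ⟨t, ht⟩ B ⟨hB, hle⟩
    exact ⟨σ ⟨t, ht⟩ n, ⟨(⟨t, ht⟩, n), rfl⟩, hn⟩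
  have h1 : splittingNumber ≤ #F := csInf_le' ⟨F, hsplit, rfl⟩
  have h2 : #F ≤ #(U × ℕ) := Cardinal.mk_range_le
  have hcof : ℵ₀ ≤ Cardinal.continuum.ord.cof :=
    Ordinal.aleph0_le_cof.2 (Cardinal.isSuccLimit_ord Cardinal.aleph0_le_continuum)
  have h3 : #(U × ℕ) = Cardinal.continuum.ord.cof := by
    rw [Cardinal.mk_prod, Cardinal.mk_nat, Cardinal.lift_id, Cardinal.lift_id, hUcard]
    exact Cardinal.mul_eq_left hcof hcof Cardinal.aleph0_ne_zero
  exact h1.trans (h2.trans_eq h3)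
end

section
/- The generalized reaping number 𝔯_θ is strictly greater than θ for every infinite cardinal θ. -/
open Cardinal Set Ordinal

/-- For an infinite cardinal `θ` (represented by the type `θ.ord.ToType`),
`S` splits `B` if both `B ∩ S` and `B \ S` have cardinality `θ`. -/
def SplitsTheta (θ : Cardinal) (S B : Set θ.ord.ToType) : Prop :=
  #(B ∩ S : Set θ.ord.ToType) = θ ∧ #(B \ S : Set θ.ord.ToType) = θ

/-- The generalized reaping number `𝔯_θ`: the least cardinality of a family of
size-`θ` subsets of `θ` such that no single subset of `θ` splits all of them. -/
noncomputable def reapingNumberTheta (θ : Cardinal) : Cardinal :=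
  sInf {c : Cardinal | ∃ R : Set (Set θ.ord.ToType), (∀ B ∈ R, #B = θ) ∧
    (∀ S : Set θ.ord.ToType, ∃ B ∈ R, ¬ SplitsTheta θ S B) ∧ #R = c}

section Aux

variable {θ : Cardinal}

lemma small_seg (α : θ.ord.ToType) : #{β : θ.ord.ToType // β < α} < θ := by
  haveI : IsWellOrder θ.ord.ToType (· < ·) := isWellOrder_lt
  have h := Cardinal.card_typein_lt (r := ((· < ·) : θ.ord.ToType → θ.ord.ToType → Prop)) α
    (by rw [mk_ord_toType, type_toType])
  rw [← Ordinal.card_typein (r := ((· < ·) : θ.ord.ToType → θ.ord.ToType → Prop))]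
  rw [mk_ord_toType] at h
  exact h

lemma mk_diff_eq {A u : Set θ.ord.ToType} (hθ : ℵ₀ ≤ θ) (hA : #A = θ) (hu : #u < θ) :
    #(A \ u : Set θ.ord.ToType) = θ := by
  refine le_antisymm ((mk_le_mk_of_subset diff_subset).trans hA.le) ?_
  by_contra h
  push_neg at h
  have h1 : #A ≤ #((A \ u) ∪ u : Set θ.ord.ToType) :=
    mk_le_mk_of_subset (by rw [diff_union_self]; exact subset_union_left)
  have h2 : #A ≤ #(A \ u : Set θ.ord.ToType) + #u := h1.trans (mk_union_le _ _)
  rw [hA] at h2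
  exact absurd h2 (not_le.2 (Cardinal.add_lt_of_lt hθ h hu))

lemma diff_nonempty_of_mk {A : Set θ.ord.ToType} (hθ : ℵ₀ ≤ θ) (hA : #A = θ) : A.Nonempty := by
  rw [← Set.nonempty_coe_sort]
  exact Cardinal.mk_ne_zero_iff.mp (by rw [hA]; exact (aleph0_pos.trans_le hθ).ne')

/-- The specification for the pair of points chosen at stage `α`. -/
def PickSpec (A : Set θ.ord.ToType) (α : θ.ord.ToType)
    (g : ∀ β, β < α → θ.ord.ToType × θ.ord.ToType) (xy : θ.ord.ToType × θ.ord.ToType) : Prop :=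
  xy.1 ∈ A ∧ xy.2 ∈ A ∧ xy.1 ≠ xy.2 ∧
    ∀ β (h : β < α), xy.1 ≠ (g β h).1 ∧ xy.1 ≠ (g β h).2 ∧
      xy.2 ≠ (g β h).1 ∧ xy.2 ≠ (g β h).2

lemma exists_pair (hθ : ℵ₀ ≤ θ) {A : Set θ.ord.ToType} (hA : #A = θ) (α : θ.ord.ToType)
    (g : ∀ β, β < α → θ.ord.ToType × θ.ord.ToType) : ∃ xy, PickSpec A α g xy := by
  set u : Set θ.ord.ToType :=
    (range fun b : {β // β < α} => (g b.1 b.2).1) ∪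
    (range fun b : {β // β < α} => (g b.1 b.2).2) with hu_def
  have hu : #u < θ := (mk_union_le _ _).trans_lt
    (Cardinal.add_lt_of_lt hθ (mk_range_le.trans_lt (small_seg α))
      (mk_range_le.trans_lt (small_seg α)))
  obtain ⟨x, hxA, hxu⟩ := diff_nonempty_of_mk hθ (mk_diff_eq hθ hA hu)
  have hu2 : #(u ∪ {x} : Set θ.ord.ToType) < θ := (mk_union_le _ _).trans_lt
    (Cardinal.add_lt_of_lt hθ hu (by rw [mk_singleton]; exact one_lt_aleph0.trans_le hθ))
  obtain ⟨y, hyA, hyu⟩ := diff_nonempty_of_mk hθ (mk_diff_eq hθ hA hu2)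
  refine ⟨(x, y), hxA, hyA, ?_, ?_⟩
  · intro hxy
    exact hyu (Or.inr (mem_singleton_iff.mpr (show y = x from hxy.symm)))
  · intro β h
    exact ⟨fun he => hxu (Or.inl ⟨⟨β, h⟩, he.symm⟩),
      fun he => hxu (Or.inr ⟨⟨β, h⟩, he.symm⟩),
      fun he => hyu (Or.inl (Or.inl ⟨⟨β, h⟩, he.symm⟩)),
      fun he => hyu (Or.inl (Or.inr ⟨⟨β, h⟩, he.symm⟩))⟩

/-- Transfinitely pick pairs of fresh points. -/
noncomputable def pickFn (hθ : ℵ₀ ≤ θ) (D : θ.ord.ToType → Set θ.ord.ToType)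
    (hD : ∀ α, #(D α) = θ) : θ.ord.ToType → θ.ord.ToType × θ.ord.ToType :=
  wellFounded_lt.fix fun α ih => (exists_pair hθ (hD α) α ih).choose

lemma pickFn_spec (hθ : ℵ₀ ≤ θ) (D : θ.ord.ToType → Set θ.ord.ToType)
    (hD : ∀ α, #(D α) = θ) (α : θ.ord.ToType) :
    PickSpec (D α) α (fun β _ => pickFn hθ D hD β) (pickFn hθ D hD α) := by
  have key : pickFn hθ D hD α =
      (exists_pair hθ (hD α) α (fun β _ => pickFn hθ D hD β)).choose := by
    unfold pickFn
    exact wellFounded_lt.fix_eq _ α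
  rw [key]
  exact (exists_pair hθ (hD α) α fun β _ => pickFn hθ D hD β).choose_spec

lemma pickFn_ne (hθ : ℵ₀ ≤ θ) (D : θ.ord.ToType → Set θ.ord.ToType)
    (hD : ∀ α, #(D α) = θ) {δ ε : θ.ord.ToType} :
    (pickFn hθ D hD δ).1 ≠ (pickFn hθ D hD ε).2 ∧
    (δ ≠ ε → (pickFn hθ D hD δ).1 ≠ (pickFn hθ D hD ε).1 ∧
      (pickFn hθ D hD δ).2 ≠ (pickFn hθ D hD ε).2) := by
  rcases lt_trichotomy δ ε with h | h | h
  · obtain ⟨-, -, -, h4⟩ := pickFn_spec hθ D hD ε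
    obtain ⟨a, b, c, d⟩ := h4 δ h
    exact ⟨fun he => c he.symm, fun _ => ⟨a.symm, d.symm⟩⟩
  · subst h
    obtain ⟨-, -, h3, -⟩ := pickFn_spec hθ D hD δ
    exact ⟨h3, fun hne => absurd rfl hne⟩
  · obtain ⟨-, -, -, h4⟩ := pickFn_spec hθ D hD δ
    obtain ⟨a, b, c, d⟩ := h4 ε h
    exact ⟨b, fun _ => ⟨a, d⟩⟩

lemma exists_splitting (hθ : ℵ₀ ≤ θ) (C : θ.ord.ToType → Set θ.ord.ToType)
    (hC : ∀ i, #(C i) = θ) : ∃ S, ∀ i, SplitsTheta θ S (C i) := by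
  have hκ : #θ.ord.ToType = θ := mk_ord_toType θ
  have hprod : #θ.ord.ToType = #(θ.ord.ToType × θ.ord.ToType) := by
    rw [mk_prod, Cardinal.lift_id, hκ, Cardinal.mul_eq_self hθ]
  obtain ⟨p⟩ : Nonempty (θ.ord.ToType ≃ θ.ord.ToType × θ.ord.ToType) := Cardinal.eq.mp hprod
  set D : θ.ord.ToType → Set θ.ord.ToType := fun α => C (p α).2 with hD_def
  have hD : ∀ α, #(D α) = θ := fun α => hC _
  set f := pickFn hθ D hD with hf_def
  set S : Set θ.ord.ToType := range fun δ => (f δ).1 with hS_def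
  have hmemS : ∀ δ, (f δ).1 ∈ S := fun δ => ⟨δ, rfl⟩
  have hnotS : ∀ δ, (f δ).2 ∉ S := by
    rintro δ ⟨ε, hε⟩
    exact (pickFn_ne hθ D hD (δ := ε) (ε := δ)).1 hε
  have hfst : ∀ δ, (f δ).1 ∈ C (p δ).2 := fun δ => (pickFn_spec hθ D hD δ).1
  have hsnd : ∀ δ, (f δ).2 ∈ C (p δ).2 := fun δ => (pickFn_spec hθ D hD δ).2.1
  refine ⟨S, fun i => ⟨?_, ?_⟩⟩
  · refine le_antisymm ((mk_le_mk_of_subset inter_subset_left).trans (hC i).le) ?_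
    set F : θ.ord.ToType → θ.ord.ToType := fun α => (f (p.symm (α, i))).1 with hF_def
    have hFinj : Function.Injective F := by
      intro a b hab
      by_contra hne
      have hne' : p.symm (a, i) ≠ p.symm (b, i) := fun h =>
        hne (by simpa using congrArg p h)
      exact ((pickFn_ne hθ D hD).2 hne').1 hab
    have hFsub : range F ⊆ C i ∩ S := by
      rintro _ ⟨a, rfl⟩
      refine ⟨?_, hmemS _⟩
      have := hfst (p.symm (a, i))
      rwa [Equiv.apply_symm_apply] at this
    calc θ = #θ.ord.ToType := hκ.symm
      _ = #(range F) := (mk_range_eq F hFinj).symm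
      _ ≤ #(C i ∩ S : Set θ.ord.ToType) := mk_le_mk_of_subset hFsub
  · refine le_antisymm ((mk_le_mk_of_subset diff_subset).trans (hC i).le) ?_
    set F : θ.ord.ToType → θ.ord.ToType := fun α => (f (p.symm (α, i))).2 with hF_def
    have hFinj : Function.Injective F := by
      intro a b hab
      by_contra hne
      have hne' : p.symm (a, i) ≠ p.symm (b, i) := fun h =>
        hne (by simpa using congrArg p h)
      exact ((pickFn_ne hθ D hD).2 hne').2 hab
    have hFsub : range F ⊆ C i \ S := by
      rintro _ ⟨a, rfl⟩
      refine ⟨?_, hnotS _⟩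
      have := hsnd (p.symm (a, i))
      rwa [Equiv.apply_symm_apply] at this
    calc θ = #θ.ord.ToType := hκ.symm
      _ = #(range F) := (mk_range_eq F hFinj).symm
      _ ≤ #(C i \ S : Set θ.ord.ToType) := mk_le_mk_of_subset hFsub

lemma exists_splitter (hθ : ℵ₀ ≤ θ) (R : Set (Set θ.ord.ToType)) (hR : #R ≤ θ)
    (hB : ∀ B ∈ R, #B = θ) : ∃ S, ∀ B ∈ R, SplitsTheta θ S B := by
  rcases R.eq_empty_or_nonempty with rfl | hne
  · exact ⟨∅, fun B h => absurd h (notMem_empty B)⟩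
  · haveI : Nonempty ↥R := hne.to_subtype
    have hR' : #↥R ≤ #θ.ord.ToType := hR.trans_eq (mk_ord_toType θ).symm
    obtain ⟨g⟩ : Nonempty (↥R ↪ θ.ord.ToType) := Cardinal.le_def _ _ |>.mp hR'
    have hsf := Function.invFun_surjective g.injective
    set C : θ.ord.ToType → Set θ.ord.ToType :=
      fun i => ((Function.invFun g i : ↥R) : Set θ.ord.ToType) with hC_def
    obtain ⟨S, hS⟩ := exists_splitting hθ C (fun i => hB _ (Function.invFun g i).2)
    refine ⟨S, fun B hBm => ?_⟩
    obtain ⟨i, hi⟩ := hsf ⟨B, hBm⟩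
    have h := hS i
    rwa [show C i = B from by rw [hC_def]; simp [hi]] at h

lemma reaping_family_exists (hθ : ℵ₀ ≤ θ) :
    #{B : Set θ.ord.ToType | #B = θ} ∈ {c : Cardinal |
      ∃ R : Set (Set θ.ord.ToType), (∀ B ∈ R, #B = θ) ∧
      (∀ S : Set θ.ord.ToType, ∃ B ∈ R, ¬ SplitsTheta θ S B) ∧ #R = c} := by
  refine ⟨{B | #B = θ}, fun B hB => hB, fun S => ?_, rfl⟩
  have hθ0 : θ ≠ 0 := (aleph0_pos.trans_le hθ).ne'
  by_cases h : #S = θ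
  · refine ⟨S, h, fun hsp => ?_⟩
    have h2 := hsp.2
    rw [diff_self] at h2
    simp only [mk_eq_zero] at h2
    exact hθ0 h2.symm
  · have hSlt : #S < θ := lt_of_le_of_ne ((mk_set_le S).trans_eq (mk_ord_toType θ)) h
    have hc : #(Sᶜ : Set θ.ord.ToType) = θ := by
      rw [compl_eq_univ_diff]
      exact mk_diff_eq hθ (by rw [mk_univ, mk_ord_toType]) hSlt
    refine ⟨Sᶜ, hc, fun hsp => ?_⟩
    have h1 := hsp.1
    rw [compl_inter_self] at h1
    simp only [mk_eq_zero] at h1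
    exact hθ0 h1.symm

end Aux

theorem theta_lt_reapingNumberTheta (θ : Cardinal) (hθ : ℵ₀ ≤ θ) :
    θ < reapingNumberTheta θ := by
  have hne : {c : Cardinal | ∃ R : Set (Set θ.ord.ToType), (∀ B ∈ R, #B = θ) ∧
      (∀ S : Set θ.ord.ToType, ∃ B ∈ R, ¬ SplitsTheta θ S B) ∧ #R = c}.Nonempty :=
    ⟨_, reaping_family_exists hθ⟩
  obtain ⟨R, hB, hsp, hcard⟩ := csInf_mem hne
  rw [reapingNumberTheta]
  by_contra h
  push_neg at h
  rw [← hcard] at h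
  obtain ⟨S, hS⟩ := exists_splitter hθ R h hB
  obtain ⟨B, hBm, hnsp⟩ := hsp S
  exact hnsp (hS B hBm)
end

section
/- If 2^ℵ₀ = ℵ₁ then the strong polarized relation (ℵ₁, ℵ₀) → (ℵ₁, ℵ₀)^{1,1}_2 fails: there exists c : ω₁ × ω → 2 such that for no uncountable A ⊆ ω₁ and infinite B ⊆ ω is c constant on A × B. -/
open Cardinal Set

lemma exists_bool_not_const (S : ℕ → Set ℕ) (hS : ∀ i, (S i).Infinite) :
    ∃ f : ℕ → Bool, ∀ i, ∀ v : Bool, ∃ m ∈ S i, f m ≠ v := by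
  classical
  choose g hg1 hg2 using fun i (a : ℕ) => (hS i).exists_gt a
  let n : ℕ → ℕ := fun k => Nat.rec (g 0 0) (fun k nk => g ((k + 1) / 2) nk) k
  have hmem : ∀ k, n k ∈ S (k / 2) := by
    intro k
    cases k with
    | zero => exact hg1 0 0
    | succ k => exact hg1 _ _
  have hmono : StrictMono n := strictMono_nat_of_lt_succ (fun k => hg2 _ _)
  refine ⟨fun m => if ∃ i, n (2 * i + 1) = m then true else false, fun i v => ?_⟩
  cases v with
  | false =>
      refine ⟨n (2 * i + 1), ?_, ?_⟩
      · have h2 : (2 * i + 1) / 2 = i := by omega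
        simpa [h2] using hmem (2 * i + 1)
      · simp only [ne_eq, if_pos (show ∃ j, n (2 * j + 1) = n (2 * i + 1) from ⟨i, rfl⟩)]
        simp
  | true =>
      refine ⟨n (2 * i), ?_, ?_⟩
      · have h2 : (2 * i) / 2 = i := by omega
        simpa [h2] using hmem (2 * i)
      · have hni : ¬ ∃ j, n (2 * j + 1) = n (2 * i) := by
          rintro ⟨j, hj⟩
          have : 2 * j + 1 = 2 * i := hmono.injective hj
          omega
        simp [if_neg hni]

lemma CH_lift.{u', v'} (h : Cardinal.continuum.{u'} = Cardinal.aleph 1) :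
    Cardinal.continuum.{v'} = Cardinal.aleph 1 := by
  have h1 : Cardinal.lift.{v'} Cardinal.continuum.{u'}
      = Cardinal.lift.{v'} (Cardinal.aleph 1) := congrArg _ h
  rw [Cardinal.lift_continuum, Cardinal.lift_aleph, Ordinal.lift_one] at h1
  have h2 : Cardinal.lift.{u'} Cardinal.continuum.{v'}
      = Cardinal.lift.{u'} (Cardinal.aleph 1) := by
    rw [Cardinal.lift_continuum, Cardinal.lift_aleph, Ordinal.lift_one]
    exact h1
  exact Cardinal.lift_injective h2

lemma neg_polarized_key.{u'} (h : Cardinal.continuum.{u'} = Cardinal.aleph 1) :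
    ∃ c : (Cardinal.aleph.{u'} 1).ord.ToType × ℕ → Bool,
      ∀ A : Set (Cardinal.aleph.{u'} 1).ord.ToType, ∀ B : Set ℕ,
        #A = Cardinal.aleph 1 → B.Infinite →
          ¬ ∃ v : Bool, ∀ a ∈ A, ∀ b ∈ B, c (a, b) = v := by
  classical
  obtain ⟨e⟩ : Nonempty (Set ℕ ≃ (Cardinal.aleph.{u'} 1).ord.ToType) := by
    refine Cardinal.lift_mk_eq'.1 ?_
    rw [mk_set, mk_nat, two_power_aleph0, Cardinal.mk_toType, Cardinal.card_ord,
      Cardinal.lift_continuum, Cardinal.lift_uzero]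
    exact h
  have hcount : ∀ α : (Cardinal.aleph.{u'} 1).ord.ToType, (Set.Iic α).Countable := by
    intro α
    have hins : Set.Iic α = insert α (Set.Iio α) := by
      ext x
      simp [le_iff_lt_or_eq, or_comm]
    rw [hins]
    exact (((countable_iff_lt_aleph_one _).2 (Cardinal.mk_Iio_ord_toType α))).insert α
  have hne : ∀ α : (Cardinal.aleph.{u'} 1).ord.ToType, (Set.Iic α).Nonempty :=
    fun α => ⟨α, Set.mem_Iic.mpr le_rfl⟩
  choose g hg using fun α : (Cardinal.aleph.{u'} 1).ord.ToType =>
    (hcount α).exists_surjective (hne α)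
  set S : (Cardinal.aleph.{u'} 1).ord.ToType → ℕ → Set ℕ := fun α i =>
    if (e.symm ((g α i : (Cardinal.aleph.{u'} 1).ord.ToType))).Infinite then
      e.symm ((g α i : (Cardinal.aleph.{u'} 1).ord.ToType)) else Set.univ with hSdef
  have hSinf : ∀ α i, (S α i).Infinite := by
    intro α i
    by_cases hi : (e.symm ((g α i : (Cardinal.aleph.{u'} 1).ord.ToType))).Infinite
    · simpa [hSdef, if_pos hi] using hi
    · simpa [hSdef, if_neg hi] using Set.infinite_univ
  choose f hf using fun α : (Cardinal.aleph.{u'} 1).ord.ToType =>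
    exists_bool_not_const (S α) (hSinf α)
  refine ⟨fun p => f p.1 p.2, fun A B hA hB ⟨v, hv⟩ => ?_⟩
  set β := e B with hβ
  have hexists : ∃ α ∈ A, β ≤ α := by
    by_contra hcon
    push_neg at hcon
    have hsub : A ⊆ Set.Iio β := fun a ha => hcon a ha
    have hlt := (Cardinal.mk_le_mk_of_subset hsub).trans_lt (Cardinal.mk_Iio_ord_toType β)
    rw [hA] at hlt
    exact lt_irrefl _ hlt
  obtain ⟨α, hαA, hβα⟩ := hexists
  obtain ⟨i, hi⟩ := hg α ⟨β, hβα⟩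
  have hgi : (g α i : (Cardinal.aleph.{u'} 1).ord.ToType) = β := by rw [hi]
  have hSB : S α i = B := by
    rw [hSdef]
    simp only [hgi, hβ, Equiv.symm_apply_apply, if_pos hB]
  obtain ⟨m, hm, hne'⟩ := hf α i v
  rw [hSB] at hm
  exact hne' (hv α hαA m hm)

theorem neg_polarized_aleph_one_of_CH
    (h : Cardinal.continuum = Cardinal.aleph 1) :
    ∃ c : (Cardinal.aleph 1).ord.ToType × ℕ → Bool,
      ∀ A : Set (Cardinal.aleph 1).ord.ToType, ∀ B : Set ℕ,
        #A = Cardinal.aleph 1 → B.Infinite →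
          ¬ ∃ v : Bool, ∀ a ∈ A, ∀ b ∈ B, c (a, b) = v := by
  exact neg_polarized_key (CH_lift h)
end

section
/- If κ is a cardinal with countable cofinality and κ ≤ 𝔰, then the strong polarized relation (κ, ω) → (κ, ω)^{1,1}_2 fails: there is a coloring c : κ × ω → 2 with no monochromatic A × B where |A| = κ and B is infinite. -/
open Cardinal Set

theorem neg_polarized_of_countable_cof_below_splitting
    (κ : Cardinal) (hcof : κ.ord.cof = ℵ₀) (hκ : κ ≤ splittingNumber) :
    ∃ c : κ.ord.ToType × ℕ → Bool,
      ∀ A : Set κ.ord.ToType, ∀ B : Set ℕ,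
        #A = κ → B.Infinite →
          ¬ ∃ v : Bool, ∀ a ∈ A, ∀ b ∈ B, c (a, b) = v := by
  have hlim : Order.IsSuccLimit κ.ord := Ordinal.aleph0_le_cof.mp hcof.ge
  have hκ0 : ℵ₀ ≤ κ := by
    rw [← Cardinal.ord_le_ord, Cardinal.ord_aleph0]
    exact Ordinal.omega0_le_of_isSuccLimit hlim
  haveI : NoMaxOrder κ.ord.ToType := Cardinal.noMaxOrder hκ0
  obtain ⟨S, hSunb, hScard⟩ := Order.exists_cof_eq (α := κ.ord.ToType)
  rw [Ordinal.cof_toType, hcof] at hScard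
  have hSc : S.Countable := by
    rw [← Set.countable_coe_iff, ← Cardinal.mk_le_aleph0_iff]
    exact hScard.le
  have hSne : S.Nonempty := by
    rw [← Set.nonempty_coe_sort, ← Cardinal.mk_ne_zero_iff, hScard]
    exact Cardinal.aleph0_ne_zero
  obtain ⟨g, hg⟩ := hSc.exists_eq_range hSne
  -- monotone sequence θ with g n ≤ θ n
  set θ : ℕ → κ.ord.ToType := fun n => Nat.rec (g 0) (fun n ih => max ih (g (n+1))) n with hθ
  have hθmono : Monotone θ := monotone_nat_of_le_succ (fun n => le_max_left _ _)
  have hgθ : ∀ n, g n ≤ θ n := by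
    intro n; cases n with
    | zero => exact le_refl _
    | succ n => exact le_max_right _ _
  have hunb : ∀ a : κ.ord.ToType, ∃ n, a ≤ θ n := by
    intro a
    obtain ⟨b, hbS, hba⟩ := hSunb a
    rw [hg] at hbS
    obtain ⟨n, rfl⟩ := hbS
    exact ⟨n, hba.trans (hgθ n)⟩
  refine ⟨fun p => decide (p.1 ≤ θ p.2), fun A B hA hB ⟨v, hv⟩ => ?_⟩
  cases v with
  | true =>
    obtain ⟨b₀, hb₀⟩ := hB.nonempty
    obtain ⟨m, hm⟩ := exists_gt (θ b₀)
    have : ∃ a ∈ A, ¬ a ≤ θ b₀ := by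
      by_contra h
      push_neg at h
      have hsub : A ⊆ Set.Iio m := fun a ha => lt_of_le_of_lt (h a ha) hm
      have := (Cardinal.mk_le_mk_of_subset hsub).trans_lt (Cardinal.mk_Iio_toType_ord_lt m)
      rw [hA] at this
      exact lt_irrefl _ this
    obtain ⟨a, haA, ha⟩ := this
    have := hv a haA b₀ hb₀
    simp [ha] at this
  | false =>
    have hAne : A.Nonempty := by
      rw [← Set.nonempty_coe_sort, ← Cardinal.mk_ne_zero_iff, hA]
      intro h
      rw [h] at hκ0
      exact Cardinal.aleph0_ne_zero (le_antisymm hκ0 zero_le)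
    obtain ⟨a, haA⟩ := hAne
    obtain ⟨n, hn⟩ := hunb a
    obtain ⟨b, hbB, hnb⟩ := hB.exists_gt n
    have hab : a ≤ θ b := hn.trans (hθmono hnb.le)
    have := hv a haA b hbB
    simp [hab] at this
end

section
/- Assume 𝔠 is regular. Then the strong polarized relation (𝔠, ω) → (𝔠, ω)^{1,1}_2 holds if and only if 𝔯 < 𝔠, granted that 𝔯 < cf(κ) implies (κ,ω) → (κ,ω)^{1,1}_2 for all κ ≤ 𝔠 (the positive theorem above 𝔯). -/
open Cardinal Set

/-- The strong polarized relation `(κ, ω) → (κ, ω)^{1,1}_2`. -/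
def PolarizedRel (κ : Cardinal) : Prop :=
  ∀ c : κ.ord.ToType × ℕ → Bool,
    ∃ A : Set κ.ord.ToType, ∃ B : Set ℕ, #A = κ ∧ B.Infinite ∧
      ∃ v : Bool, ∀ a ∈ A, ∀ b ∈ B, c (a, b) = v

/-- Transfer of the polarized relation along universes. -/
lemma polar_transfer {κ : Cardinal.{u}} {μ : Cardinal.{v}}
    (g : κ.ord.ToType ≃ μ.ord.ToType) (hκ : Cardinal.lift.{v} κ = Cardinal.lift.{u} μ)
    (h : PolarizedRel κ) : PolarizedRel μ := by
  intro c
  obtain ⟨A, B, hA, hB, v, hv⟩ := h (fun p => c (g p.1, p.2))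
  refine ⟨g '' A, B, ?_, hB, v, ?_⟩
  · have h1 : Cardinal.lift.{v} #A = Cardinal.lift.{u} #(g '' A) :=
      Cardinal.lift_mk_eq'.2 ⟨Equiv.Set.image g A g.injective⟩
    rw [hA, hκ] at h1
    exact (Cardinal.lift_injective h1).symm
  · rintro a ⟨x, hx, rfl⟩ b hb
    exact hv x hx b hb

lemma toType_equiv : Nonempty
    (Cardinal.continuum.{u}.ord.ToType ≃ Cardinal.continuum.{v}.ord.ToType) := by
  refine Cardinal.lift_mk_eq'.1 ?_
  rw [Cardinal.mk_ord_toType, Cardinal.mk_ord_toType, Cardinal.lift_continuum,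
    Cardinal.lift_continuum]

/-- Universe transfer of regularity of the continuum (cofinality form). -/
lemma cof_continuum_of_isRegular (hreg : Cardinal.continuum.{u}.IsRegular) :
    Cardinal.continuum.{v}.ord.cof = Cardinal.continuum.{v} := by
  have h1 : Cardinal.lift.{u} (Cardinal.continuum.{v}.ord.cof)
      = Cardinal.lift.{u} Cardinal.continuum.{v} := by
    rw [Ordinal.lift_cof, Cardinal.lift_ord, Cardinal.lift_continuum]
    have h2 : Cardinal.lift.{v} (Cardinal.continuum.{u}.ord.cof)
        = Cardinal.lift.{v} Cardinal.continuum.{u} := by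
      rw [hreg.cof_eq]
    rw [Ordinal.lift_cof, Cardinal.lift_ord, Cardinal.lift_continuum] at h2
    exact h2
  exact Cardinal.lift_injective h1

/-- Core negative argument, at universe 0: if `𝔠 ≤ 𝔯` then the polarized relation fails. -/
lemma not_polarized_of_le (hlt : Cardinal.continuum.{0} ≤ reapingNumber) :
    ¬ PolarizedRel Cardinal.continuum.{0} := by
  classical
  intro hpol
  have hsub : #{B : Set ℕ // B.Infinite} ≤ #Cardinal.continuum.{0}.ord.ToType := by
    rw [Cardinal.mk_ord_toType]
    refine le_trans (Cardinal.mk_subtype_le _) ?_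
    rw [Cardinal.mk_set, Cardinal.mk_nat, Cardinal.two_power_aleph0]
  obtain ⟨f⟩ := (Cardinal.le_def _ _).1 hsub
  have hne : Nonempty {B : Set ℕ // B.Infinite} := ⟨⟨Set.univ, Set.infinite_univ⟩⟩
  set e : Cardinal.continuum.{0}.ord.ToType → {B : Set ℕ // B.Infinite} :=
    Function.invFun f with hedef
  have hesurj : Function.Surjective e := Function.invFun_surjective f.injective
  have hIio : ∀ α : Cardinal.continuum.{0}.ord.ToType,
      #(Set.Iio α) < Cardinal.continuum.{0} := by
    intro α
    letI inst : IsWellOrder Cardinal.continuum.{0}.ord.ToType (· < ·) := isWellOrder_lt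
    have h2 := Cardinal.card_typein_lt (r := (· < ·)) α
      (by rw [Cardinal.mk_ord_toType, Ordinal.type_toType])
    have h3 := Ordinal.card_typein (r := (· < ·)) α
    rw [h3, Cardinal.mk_ord_toType] at h2
    exact h2
  have hsplit : ∀ α : Cardinal.continuum.{0}.ord.ToType, ∃ S : Set ℕ, S.Infinite ∧
      ∀ β, β < α → Splits S (e β).1 := by
    intro α
    set R : Set (Set ℕ) := (fun β => (e β).1) '' Set.Iio α with hRdef
    have hRcard : #R < reapingNumber :=
      lt_of_lt_of_le (lt_of_le_of_lt Cardinal.mk_image_le (hIio α)) hlt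
    by_contra hcon
    push_neg at hcon
    have hreap : ∀ S : Set ℕ, S.Infinite → ∃ B ∈ R, ¬ Splits S B := by
      intro S hS
      obtain ⟨β, hβ, hns⟩ := hcon S hS
      exact ⟨(e β).1, ⟨β, hβ, rfl⟩, hns⟩
    have hinf : ∀ B ∈ R, B.Infinite := by
      rintro B ⟨β, -, rfl⟩
      exact (e β).2
    have : reapingNumber ≤ #R := csInf_le' ⟨R, hinf, hreap, rfl⟩
    exact absurd hRcard (not_lt.2 this)
  choose S hSinf hS using hsplit
  obtain ⟨A, B, hA, hB, v, hv⟩ := hpol (fun p => decide (p.2 ∈ S p.1))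
  obtain ⟨β, hβ⟩ := hesurj ⟨B, hB⟩
  have hIic : #(Set.Iic β) < Cardinal.continuum.{0} := by
    rw [← Set.Iio_insert]
    refine lt_of_le_of_lt Cardinal.mk_insert_le ?_
    exact Cardinal.add_lt_of_lt Cardinal.aleph0_le_continuum (hIio β)
      (lt_of_lt_of_le Cardinal.one_lt_aleph0 Cardinal.aleph0_le_continuum)
  have hub : ∃ α ∈ A, β < α := by
    by_contra hcon
    push_neg at hcon
    have hAs : A ⊆ Set.Iic β := fun α hα => hcon α hα
    have := Cardinal.mk_le_mk_of_subset hAs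
    rw [hA] at this
    exact absurd (lt_of_le_of_lt this hIic) (lt_irrefl _)
  obtain ⟨α, hαA, hβα⟩ := hub
  have hsp : Splits (S α) B := by
    have := hS α β hβα
    rwa [hβ] at this
  obtain ⟨n, hn⟩ := hsp.1.nonempty
  obtain ⟨m, hm⟩ := hsp.2.nonempty
  have h1 : decide (n ∈ S α) = v := hv α hαA n hn.1
  have h2 : decide (m ∈ S α) = v := hv α hαA m hm.1
  have e1 : v = true := by rw [← h1]; simp [hn.2]
  have e2 : v = false := by rw [← h2]; simp [hm.2]
  rw [e1] at e2
  exact Bool.noConfusion e2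

theorem polarized_continuum_iff_reaping_lt
    (hreg : Cardinal.continuum.IsRegular)
    (habove : ∀ κ : Cardinal, reapingNumber < κ.ord.cof → κ ≤ Cardinal.continuum →
      PolarizedRel κ) :
    PolarizedRel Cardinal.continuum ↔ reapingNumber < Cardinal.continuum := by
  constructor
  · intro hpol
    by_contra hlt
    push_neg at hlt
    obtain ⟨g⟩ := toType_equiv
    exact not_polarized_of_le hlt
      (polar_transfer g (by rw [Cardinal.lift_continuum, Cardinal.lift_continuum]) hpol)
  · intro h
    have h0 : PolarizedRel Cardinal.continuum.{0} := by
      refine habove Cardinal.continuum ?_ le_rfl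
      rwa [cof_continuum_of_isRegular hreg]
    obtain ⟨g⟩ := toType_equiv
    exact polar_transfer g (by rw [Cardinal.lift_continuum, Cardinal.lift_continuum]) h0
end

section
/- Let (X, Σ, m) be a probability space, θ an infinite cardinal, and for each α < θ let e_α : ω → (X → 2) be a sequence of measurable functions. Suppose there is a point i ∈ X such that the family {(e_α(n)(i))_{n∈ω} : α < θ} ⊆ 2^ω is a Sierpiński set, i.e. for every Lebesgue-null B ⊆ 2^ω, only countably many α have (e_α(n)(i))_n ∈ B. Then the coloring c(α, n) = e_α(n)(i) witnesses the failure of (θ, ω) → (ℵ₁, ω)^{1,1}_2: there are no sets H₀ ⊆ θ with |H₀| = ℵ₁ and H₁ ⊆ ω infinite such that c is constant on H₀ × H₁. -/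
open MeasureTheory Set Cardinal

/-- `μ` is the product probability measure on Cantor space `2^ω`. -/
def IsCoinFlipMeasure (μ : Measure (ℕ → Bool)) : Prop :=
  μ Set.univ = 1 ∧
    ∀ (s : Finset ℕ) (f : ℕ → Bool),
      μ {x | ∀ n ∈ s, x n = f n} = (1 / 2 : ENNReal) ^ s.card

theorem sierpinski_family_gives_neg_polarized
    {X : Type*} [MeasurableSpace X] (m : Measure X) [IsProbabilityMeasure m]
    (θ : Cardinal) (hθ : ℵ₀ ≤ θ)
    (e : θ.ord.ToType → ℕ → X → Bool)
    (hmeas : ∀ (α : θ.ord.ToType) (n : ℕ), Measurable (e α n))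
    (μ : Measure (ℕ → Bool)) (hμ : IsCoinFlipMeasure μ)
    (i : X)
    (hSier : ∀ B : Set (ℕ → Bool), μ B = 0 →
      {α : θ.ord.ToType | (fun n => e α n i) ∈ B}.Countable) :
    ¬ ∃ H₀ : Set θ.ord.ToType, ∃ H₁ : Set ℕ,
        #H₀ = Cardinal.aleph 1 ∧ H₁.Infinite ∧
        ∃ v : Bool, ∀ α ∈ H₀, ∀ n ∈ H₁, e α n i = v := by
  rintro ⟨H₀, H₁, hcard, hinf, v, hmono⟩
  set B : Set (ℕ → Bool) := {x | ∀ n ∈ H₁, x n = v} with hB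
  have hBnull : μ B = 0 := by
    have hle : ∀ k : ℕ, μ B ≤ (1 / 2 : ENNReal) ^ k := by
      intro k
      obtain ⟨s, hs, hscard⟩ := hinf.exists_subset_card_eq k
      calc μ B ≤ μ {x | ∀ n ∈ s, x n = v} := by
            apply measure_mono
            intro x hx n hn
            exact hx n (hs hn)
        _ = (1 / 2 : ENNReal) ^ s.card := hμ.2 s (fun _ => v)
        _ = (1 / 2 : ENNReal) ^ k := by rw [hscard]
    have htend : Filter.Tendsto (fun k : ℕ => (1 / 2 : ENNReal) ^ k)
        Filter.atTop (nhds 0) :=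
      ENNReal.tendsto_pow_atTop_nhds_zero_of_lt_one (by norm_num)
    have := ge_of_tendsto' htend hle
    simpa using this
  have hcount := hSier B hBnull
  have hsub : H₀ ⊆ {α : θ.ord.ToType | (fun n => e α n i) ∈ B} := by
    intro α hα n hn
    exact hmono α hα n hn
  have : #H₀ ≤ ℵ₀ := (hcount.mono hsub).le_aleph0
  rw [hcard] at this
  exact absurd this (by simpa using (aleph_lt_aleph.mpr (by norm_num : (0:Ordinal) < 1)).not_ge)
end

section
/- If there exists a Sierpiński set of cardinality ℵ₁ in 2^ω (an uncountable set meeting every null set in a countable set), then the strong polarized relation (ℵ₁, ω) → (ℵ₁, ω)^{1,1}_2 fails. -/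
open MeasureTheory Set Cardinal

universe u in
private theorem sierpinski_aux
    (μ : Measure (ℕ → Bool)) (hμ : IsCoinFlipMeasure μ)
    (S : Set (ℕ → Bool)) (hS : #S = Cardinal.aleph 1)
    (hSier : ∀ N : Set (ℕ → Bool), μ N = 0 → (S ∩ N).Countable) :
    ∃ c : (Cardinal.aleph.{u} 1).ord.ToType × ℕ → Bool,
      ∀ A : Set (Cardinal.aleph.{u} 1).ord.ToType, ∀ B : Set ℕ,
        #A = Cardinal.aleph 1 → B.Infinite →
          ¬ ∃ v : Bool, ∀ a ∈ A, ∀ b ∈ B, c (a, b) = v := by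
  have hmk : Cardinal.lift.{0} #(Cardinal.aleph.{u} 1).ord.ToType
      = Cardinal.lift.{u} #S := by
    rw [Cardinal.mk_ord_toType, hS, Cardinal.lift_aleph, Cardinal.lift_aleph,
      Ordinal.lift_one, Ordinal.lift_one]
  obtain ⟨e⟩ := Cardinal.lift_mk_eq'.1 hmk
  refine ⟨fun p => (e p.1 : ℕ → Bool) p.2, fun A B hA hB ⟨v, hv⟩ => ?_⟩
  -- The null set
  set N : Set (ℕ → Bool) := {x | ∀ n ∈ B, x n = v} with hN
  have hμN : μ N = 0 := by
    have hle : ∀ k : ℕ, μ N ≤ (1 / 2 : ENNReal) ^ k := by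
      intro k
      obtain ⟨F, hFB, hFcard⟩ := hB.exists_subset_card_eq k
      have hsub : N ⊆ {x | ∀ n ∈ F, x n = (fun _ => v) n} := by
        intro x hx n hn
        exact hx n (hFB hn)
      calc μ N ≤ μ {x | ∀ n ∈ F, x n = (fun _ => v) n} := measure_mono hsub
        _ = (1 / 2 : ENNReal) ^ F.card := hμ.2 F (fun _ => v)
        _ = (1 / 2 : ENNReal) ^ k := by rw [hFcard]
    have htend : Filter.Tendsto (fun k : ℕ => (1 / 2 : ENNReal) ^ k)
        Filter.atTop (nhds 0) :=
      ENNReal.tendsto_pow_atTop_nhds_zero_of_lt_one (by norm_num)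
    have := ge_of_tendsto htend (Filter.Eventually.of_forall hle)
    exact le_antisymm this zero_le
  have hcnt : (S ∩ N).Countable := hSier N hμN
  -- A injects into S ∩ N
  have hinj : Cardinal.lift.{0} #A ≤ Cardinal.lift #(S ∩ N : Set (ℕ → Bool)) := by
    refine Cardinal.lift_mk_le'.2
      ⟨⟨fun a => ⟨(e a : ℕ → Bool), (e a).2, fun n hn => hv a a.2 n hn⟩, ?_⟩⟩
    intro a b hab
    have h1 : ((e a : S) : ℕ → Bool) = ((e b : S) : ℕ → Bool) := by
      simpa [Subtype.ext_iff] using hab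
    exact Subtype.ext (e.injective (Subtype.ext h1))
  have hfin : Cardinal.aleph 1 ≤ ℵ₀ := by
    calc Cardinal.aleph 1 = Cardinal.lift.{0} #A := by rw [hA]; simp
      _ ≤ Cardinal.lift #(S ∩ N : Set (ℕ → Bool)) := hinj
      _ ≤ Cardinal.lift ℵ₀ := Cardinal.lift_le.2 hcnt.le_aleph0
      _ = ℵ₀ := Cardinal.lift_aleph0
  exact absurd hfin (not_le.2 Cardinal.aleph0_lt_aleph_one)

theorem sierpinski_set_gives_neg_polarized_aleph_one
    (μ : Measure (ℕ → Bool)) (hμ : IsCoinFlipMeasure μ)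
    (S : Set (ℕ → Bool)) (hS : #S = Cardinal.aleph 1)
    (hSier : ∀ N : Set (ℕ → Bool), μ N = 0 → (S ∩ N).Countable) :
    ∃ c : (Cardinal.aleph 1).ord.ToType × ℕ → Bool,
      ∀ A : Set (Cardinal.aleph 1).ord.ToType, ∀ B : Set ℕ,
        #A = Cardinal.aleph 1 → B.Infinite →
          ¬ ∃ v : Bool, ∀ a ∈ A, ∀ b ∈ B, c (a, b) = v :=
  sierpinski_aux μ hμ S hS hSier
end
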